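/- Every SO-EKROM formula is closed under substructures: if a finite τ-structure 𝔄 satisfies an SO-EKROM formula Φ, then every substructure of 𝔄 also satisfies Φ. -/

import Mathlib

/-- A finite relational vocabulary: a type of relation symbols with arities. -/
structure Vocab where
  Rel : Type
  arity : Rel → ℕ

/-- A structure over a relational vocabulary. -/
structure Struct (σ : Vocab) where
  Dom : Type
  rel : (r : σ.Rel) → (Fin (σ.arity r) → Dom) → Prop

namespace SOKrom

variable {σ : Vocab}

/-- A valuation of `m` second-order relation variables with arities `ar` over a domain `D`. -/
abbrev Val (m : ℕ) (ar : Fin m → ℕ) (D : Type) := (i : Fin m) → Set (Fin (ar i) → D)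

/-- First-order literals over `σ` (atomic or negated atomic, including equality). -/
inductive FOLit (σ : Vocab) : Type
  | pos (r : σ.Rel) (args : Fin (σ.arity r) → ℕ)
  | neg (r : σ.Rel) (args : Fin (σ.arity r) → ℕ)
  | eq (a b : ℕ)
  | ne (a b : ℕ)

def FOLit.Sat (A : Struct σ) (s : ℕ → A.Dom) : FOLit σ → Prop
  | .pos r args => A.rel r (fun i => s (args i))
  | .neg r args => ¬ A.rel r (fun i => s (args i))
  | .eq a b => s a = s b
  | .ne a b => s a ≠ s b

/-- Second-order literals w.r.t. relation variables `R₀,…,R_{m-1}` of arities `ar`: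
`Rᵢ z̄`, `¬ Rᵢ z̄`, `∃z̄ Rᵢ z̄` (revised Krom only) or `⊥`. -/
inductive SOLit (m : ℕ) (ar : Fin m → ℕ) : Type
  | pos (i : Fin m) (args : Fin (ar i) → ℕ)
  | neg (i : Fin m) (args : Fin (ar i) → ℕ)
  | ex (i : Fin m)
  | bot

/-- A second-order literal is a (non-revised) Krom literal iff it is not of the
form `∃z̄ Rᵢ z̄`. -/
def SOLit.isKrom {m : ℕ} {ar : Fin m → ℕ} : SOLit m ar → Prop
  | .ex _ => False
  | _ => True

def SOLit.Sat {m : ℕ} {ar : Fin m → ℕ} (A : Struct σ) (V : Val m ar A.Dom)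
    (s : ℕ → A.Dom) : SOLit m ar → Prop
  | .pos i args => (fun j => s (args j)) ∈ V i
  | .neg i args => (fun j => s (args j)) ∉ V i
  | .ex i => ∃ t, t ∈ V i
  | .bot => False

/-- A (revised) Krom clause: finitely many first-order literals and two
second-order literals. -/
structure Clause (σ : Vocab) (m : ℕ) (ar : Fin m → ℕ) where
  fo : List (FOLit σ)
  h1 : SOLit m ar
  h2 : SOLit m ar

def Clause.Sat (A : Struct σ) {m : ℕ} {ar : Fin m → ℕ} (V : Val m ar A.Dom)
    (s : ℕ → A.Dom) (C : Clause σ m ar) : Prop :=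
  (∃ l ∈ C.fo, l.Sat A s) ∨ C.h1.Sat A V s ∨ C.h2.Sat A V s

/-- An SO-KROM^r formula: a second-order quantifier prefix
`Q₀R₀ ⋯ Q_{m-1}R_{m-1}` (`qt i = true` meaning `∃`, `false` meaning `∀`)
followed by `∀x̄ (C₁ ∧ ⋯ ∧ Cₙ)` where `x̄` are the first-order variables
with index `< nvars` and the `Cⱼ` are revised Krom clauses. -/
structure KromR (σ : Vocab) where
  m : ℕ
  ar : Fin m → ℕ
  qt : Fin m → Bool
  nvars : ℕ
  clauses : List (Clause σ m ar)

/-- The matrix `∀x̄ (C₁ ∧ ⋯ ∧ Cₙ)` evaluated in environment `e`. -/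
def KromR.Matrix (Φ : KromR σ) (A : Struct σ) (V : Val Φ.m Φ.ar A.Dom)
    (e : ℕ → A.Dom) : Prop :=
  ∀ s : ℕ → A.Dom, (∀ j, Φ.nvars ≤ j → s j = e j) → ∀ C ∈ Φ.clauses, C.Sat A V s

def KromR.satAux (Φ : KromR σ) (A : Struct σ) (e : ℕ → A.Dom)
    (V : Val Φ.m Φ.ar A.Dom) (j : ℕ) : Prop :=
  if h : j < Φ.m then
    if Φ.qt ⟨j, h⟩ then
      ∃ S, Φ.satAux A e (Function.update V ⟨j, h⟩ S) (j + 1)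
    else
      ∀ S, Φ.satAux A e (Function.update V ⟨j, h⟩ S) (j + 1)
  else Φ.Matrix A V e
termination_by Φ.m - j

/-- Satisfaction of an SO-KROM^r formula in a structure `A` under a first-order
environment `e`. -/
def KromR.Sat (Φ : KromR σ) (A : Struct σ) (e : ℕ → A.Dom) : Prop :=
  Φ.satAux A e (fun _ => ∅) 0

/-- `Φ` is a (non-revised) SO-KROM formula iff no clause uses a literal
`∃z̄ Rᵢ z̄`. -/
def KromR.isKrom (Φ : KromR σ) : Prop :=
  ∀ C ∈ Φ.clauses, C.h1.isKrom ∧ C.h2.isKrom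

/-- Number of alternations in a quantifier prefix. -/
def altCount : List Bool → ℕ
  | [] => 0
  | [_] => 0
  | a :: b :: l => (if a = b then 0 else 1) + altCount (b :: l)

def KromR.prefixList (Φ : KromR σ) : List Bool := List.ofFn Φ.qt

/-- `Φ` is a `Σ¹ₖ`(-KROM^r) formula: its second-order prefix starts with an
existential quantifier and alternates `k - 1` times. -/
def KromR.IsSigma (k : ℕ) (Φ : KromR σ) : Prop :=
  Φ.prefixList.head? = some true ∧ altCount Φ.prefixList = k - 1

/-- `Φ` is a `Π¹ₖ`(-KROM^r) formula: its second-order prefix starts with a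
universal quantifier and alternates `k - 1` times. -/
def KromR.IsPi (k : ℕ) (Φ : KromR σ) : Prop :=
  Φ.prefixList.head? = some false ∧ altCount Φ.prefixList = k - 1

end SOKrom

namespace SOKrom

variable {σ : Vocab}

/-- First-order formulas over `σ`, possibly with free occurrences of `m`
second-order relation variables of arities `ar`. -/
inductive FO (σ : Vocab) (m : ℕ) (ar : Fin m → ℕ) : Type
  | rel (r : σ.Rel) (args : Fin (σ.arity r) → ℕ)
  | svar (i : Fin m) (args : Fin (ar i) → ℕ)
  | equal (a b : ℕ)
  | not (φ : FO σ m ar)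
  | and (φ ψ : FO σ m ar)
  | or (φ ψ : FO σ m ar)
  | all (v : ℕ) (φ : FO σ m ar)
  | ex (v : ℕ) (φ : FO σ m ar)

def FO.Sat (A : Struct σ) {m : ℕ} {ar : Fin m → ℕ} (V : Val m ar A.Dom) :
    FO σ m ar → (ℕ → A.Dom) → Prop
  | .rel r args, e => A.rel r (fun i => e (args i))
  | .svar i args, e => (fun j => e (args j)) ∈ V i
  | .equal a b, e => e a = e b
  | .not φ, e => ¬ φ.Sat A V e
  | .and φ ψ, e => φ.Sat A V e ∧ ψ.Sat A V e
  | .or φ ψ, e => φ.Sat A V e ∨ ψ.Sat A V e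
  | .all v φ, e => ∀ a, φ.Sat A V (Function.update e v a)
  | .ex v φ, e => ∃ a, φ.Sat A V (Function.update e v a)

/-- A second-order formula in prenex form: a prefix of second-order
quantifiers (`qt i = true` meaning `∃`, `false` meaning `∀`) followed by a
first-order formula. -/
structure SOForm (σ : Vocab) where
  m : ℕ
  ar : Fin m → ℕ
  qt : Fin m → Bool
  matrix : FO σ m ar

def SOForm.satAux (Φ : SOForm σ) (A : Struct σ) (e : ℕ → A.Dom)
    (V : Val Φ.m Φ.ar A.Dom) (j : ℕ) : Prop :=
  if h : j < Φ.m then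
    if Φ.qt ⟨j, h⟩ then
      ∃ S, Φ.satAux A e (Function.update V ⟨j, h⟩ S) (j + 1)
    else
      ∀ S, Φ.satAux A e (Function.update V ⟨j, h⟩ S) (j + 1)
  else Φ.matrix.Sat A V e
termination_by Φ.m - j

def SOForm.Sat (Φ : SOForm σ) (A : Struct σ) (e : ℕ → A.Dom) : Prop :=
  Φ.satAux A e (fun _ => ∅) 0

/-- `Φ` is a `Σ¹ₖ` second-order formula. -/
def SOForm.IsSigma (k : ℕ) (Φ : SOForm σ) : Prop :=
  (List.ofFn Φ.qt).head? = some true ∧ altCount (List.ofFn Φ.qt) = k - 1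

/-- `Φ` is a `Π¹ₖ` second-order formula. -/
def SOForm.IsPi (k : ℕ) (Φ : SOForm σ) : Prop :=
  (List.ofFn Φ.qt).head? = some false ∧ altCount (List.ofFn Φ.qt) = k - 1

/-- `Φ` is a `Π¹₁` formula: a block of universal second-order quantifiers
followed by a first-order formula. -/
def SOForm.IsPi11 (Φ : SOForm σ) : Prop := ∀ i, Φ.qt i = false

/-! ### Ordered structures -/

/-- The extra symbols of ordered structures: a linear order `≤`, the successor
relation, and the least and greatest elements (as unary predicates). -/
inductive OrdSym : Type
  | le | succ | min | max

def ordArity : OrdSym → ℕ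
  | .le => 2
  | .succ => 2
  | .min => 1
  | .max => 1

/-- The vocabulary `σ` enlarged with the order symbols. -/
def withOrder (σ : Vocab) : Vocab where
  Rel := σ.Rel ⊕ OrdSym
  arity := Sum.elim σ.arity ordArity

/-- `A` is an ordered structure: `≤` is interpreted as a linear order of the
domain, `SUCC` as the associated successor relation, and `min`/`max` hold
exactly of the least/greatest elements. -/
def IsOrdered (A : Struct (withOrder σ)) : Prop :=
  ∃ _ : LinearOrder A.Dom,
    (∀ a b : A.Dom, A.rel (Sum.inr OrdSym.le) ![a, b] ↔ a ≤ b) ∧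
    (∀ a b : A.Dom, A.rel (Sum.inr OrdSym.succ) ![a, b] ↔
      (a < b ∧ ∀ c, ¬(a < c ∧ c < b))) ∧
    (∀ a : A.Dom, A.rel (Sum.inr OrdSym.min) ![a] ↔ ∀ b, a ≤ b) ∧
    (∀ a : A.Dom, A.rel (Sum.inr OrdSym.max) ![a] ↔ ∀ b, b ≤ a)

end SOKrom

namespace SOKrom

variable {σ : Vocab}

/-! ### Extended Krom logic (SO-EKROM) -/

/-- Literals allowed in the first-order part of an extended Krom clause:
atomic or negated atomic formulas whose relation symbol is in
`τ ∪ {X₁,…,Xₖ}` (including equality). -/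
inductive ELit (σ : Vocab) (m : ℕ) (ar : Fin m → ℕ) : Type
  | pos (r : σ.Rel) (args : Fin (σ.arity r) → ℕ)
  | neg (r : σ.Rel) (args : Fin (σ.arity r) → ℕ)
  | vpos (i : Fin m) (args : Fin (ar i) → ℕ)
  | vneg (i : Fin m) (args : Fin (ar i) → ℕ)
  | eq (a b : ℕ)
  | ne (a b : ℕ)

def ELit.Sat (A : Struct σ) {m : ℕ} {ar : Fin m → ℕ} (V : Val m ar A.Dom)
    (s : ℕ → A.Dom) : ELit σ m ar → Prop
  | .pos r args => A.rel r (fun i => s (args i))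
  | .neg r args => ¬ A.rel r (fun i => s (args i))
  | .vpos i args => (fun j => s (args j)) ∈ V i
  | .vneg i args => (fun j => s (args j)) ∉ V i
  | .eq a b => s a = s b
  | .ne a b => s a ≠ s b

/-- A positive or negated atomic formula `Yᵢ z̄` / `¬ Yᵢ z̄` with a
second-order relation variable. -/
structure HLit (m : ℕ) (ar : Fin m → ℕ) where
  sign : Bool
  i : Fin m
  args : Fin (ar i) → ℕ

def HLit.Sat {m : ℕ} {ar : Fin m → ℕ} {D : Type} (V : Val m ar D)
    (s : ℕ → D) (H : HLit m ar) : Prop :=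
  if H.sign then (fun j => s (H.args j)) ∈ V H.i
  else (fun j => s (H.args j)) ∉ V H.i

/-- An extended Krom clause `α₁ ∨ ⋯ ∨ α_l ∨ H₁ ∨ H₂`. -/
structure EClause (σ : Vocab) (m : ℕ) (ar : Fin m → ℕ) where
  fo : List (ELit σ m ar)
  h1 : HLit m ar
  h2 : HLit m ar

def EClause.Sat (A : Struct σ) {m : ℕ} {ar : Fin m → ℕ} (V : Val m ar A.Dom)
    (s : ℕ → A.Dom) (C : EClause σ m ar) : Prop :=
  (∃ l ∈ C.fo, l.Sat A V s) ∨ C.h1.Sat V s ∨ C.h2.Sat V s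

/-- An SO-EKROM formula `∀X₁∃Y₁⋯∀Xₖ∃Yₖ ∀x̄(C₁ ∧ ⋯ ∧ Cₙ)`: the second-order
prefix mixes universally quantified relation variables (the `X`'s, `qt i =
false`) and existentially quantified ones (the `Y`'s, `qt i = true`); the
well-formedness condition `wf` requires that in every clause the literals of
the first-order part only use `τ` and the `X`'s, while the two distinguished
literals `H₁, H₂` use `Y`'s. -/
structure EKrom (σ : Vocab) where
  m : ℕ
  ar : Fin m → ℕ
  qt : Fin m → Bool
  nvars : ℕ
  clauses : List (EClause σ m ar)
  wf : ∀ C ∈ clauses,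
    (∀ (i : Fin m) (args : Fin (ar i) → ℕ),
        (ELit.vpos i args ∈ C.fo ∨ ELit.vneg i args ∈ C.fo) → qt i = false) ∧
    qt C.h1.i = true ∧ qt C.h2.i = true

def EKrom.Matrix (Φ : EKrom σ) (A : Struct σ) (V : Val Φ.m Φ.ar A.Dom)
    (e : ℕ → A.Dom) : Prop :=
  ∀ s : ℕ → A.Dom, (∀ j, Φ.nvars ≤ j → s j = e j) → ∀ C ∈ Φ.clauses, C.Sat A V s

def EKrom.satAux (Φ : EKrom σ) (A : Struct σ) (e : ℕ → A.Dom)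
    (V : Val Φ.m Φ.ar A.Dom) (j : ℕ) : Prop :=
  if h : j < Φ.m then
    if Φ.qt ⟨j, h⟩ then
      ∃ S, Φ.satAux A e (Function.update V ⟨j, h⟩ S) (j + 1)
    else
      ∀ S, Φ.satAux A e (Function.update V ⟨j, h⟩ S) (j + 1)
  else Φ.Matrix A V e
termination_by Φ.m - j

def EKrom.Sat (Φ : EKrom σ) (A : Struct σ) (e : ℕ → A.Dom) : Prop :=
  Φ.satAux A e (fun _ => ∅) 0

/-- `Φ` is a `Π¹₂`-EKROM formula: all universal second-order quantifiers
precede all existential ones, i.e. the prefix has the form `∀X̄∃Ȳ`. -/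
def EKrom.IsPi2 (Φ : EKrom σ) : Prop :=
  ∀ i j : Fin Φ.m, i ≤ j → Φ.qt i = true → Φ.qt j = true

/-- The substructure of `A` induced by a subset `D` of its domain. -/
def Substruct (A : Struct σ) (D : Set A.Dom) : Struct σ where
  Dom := D
  rel := fun r v => A.rel r (fun i => (v i : A.Dom))

end SOKrom

namespace SOKrom

variable {σ : Vocab}

/-! ### Quantified Boolean formulas in DNF and their encoding as structures -/

/-- A closed quantified Boolean formula with `k` quantifier blocks and matrix
in disjunctive normal form: `nv` propositional variables, `blk x` being the
block in which variable `x` is quantified, and the matrix a disjunction of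
clauses, each clause a conjunction of literals `(sign, variable)` (with
`sign = true` for a positive literal). -/
structure QDNF (k : ℕ) where
  nv : ℕ
  blk : Fin nv → Fin k
  clauses : List (List (Bool × Fin nv))

def QDNF.evalMatrix {k : ℕ} (ψ : QDNF k) (v : Fin ψ.nv → Bool) : Prop :=
  ∃ C ∈ ψ.clauses, ∀ l ∈ C, v l.2 = l.1

/-- Truth of the quantified Boolean formula, quantifying the blocks
`h, h+1, …, k-1` in order; `sigma = true` means the prefix starts (at block 0)
with `∃`, and quantifiers alternate between consecutive blocks. -/
def QDNF.satBlk {k : ℕ} (ψ : QDNF k) (sigma : Bool) (v : Fin ψ.nv → Bool)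
    (h : ℕ) : Prop :=
  if hh : h < k then
    if (if h % 2 = 0 then sigma else !sigma) then
      ∃ u : Fin ψ.nv → Bool,
        ψ.satBlk sigma (fun x => if ψ.blk x = ⟨h, hh⟩ then u x else v x) (h + 1)
    else
      ∀ u : Fin ψ.nv → Bool,
        ψ.satBlk sigma (fun x => if ψ.blk x = ⟨h, hh⟩ then u x else v x) (h + 1)
  else ψ.evalMatrix v
termination_by k - h

/-- Truth of the closed QBF `ψ`, as a `Σₖ` sentence (`sigma = true`) or a `Πₖ`
sentence (`sigma = false`). -/
def QDNF.IsTrue {k : ℕ} (ψ : QDNF k) (sigma : Bool) : Prop :=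
  ψ.satBlk sigma (fun _ => false) 0

/-- The vocabulary `{Clause, Var₁, …, Varₖ, Pos, Neg}`: `Sum.inl 0` is the
unary symbol `Clause`, `Sum.inl ⟨h+1,_⟩` is the unary symbol `Var_{h+1}`,
`Sum.inr true` is the binary symbol `Pos` and `Sum.inr false` is `Neg`. -/
def qbfVocab (k : ℕ) : Vocab where
  Rel := Fin (k + 1) ⊕ Bool
  arity := Sum.elim (fun _ => 1) (fun _ => 2)

/-- The encoding of a QBF in DNF as a finite structure over
`{Clause, Var₁, …, Varₖ, Pos, Neg}`. -/
def QDNF.encode {k : ℕ} (ψ : QDNF k) : Struct (qbfVocab k) where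
  Dom := Fin ψ.clauses.length ⊕ Fin ψ.nv
  rel := fun r =>
    match r with
    | Sum.inl c => fun v : Fin 1 → (Fin ψ.clauses.length ⊕ Fin ψ.nv) =>
        if c.val = 0 then ∃ i, v 0 = Sum.inl i
        else ∃ x, v 0 = Sum.inr x ∧ (ψ.blk x).val + 1 = c.val
    | Sum.inr b => fun v : Fin 2 → (Fin ψ.clauses.length ⊕ Fin ψ.nv) =>
        ∃ (i : Fin ψ.clauses.length) (x : Fin ψ.nv),
          v 0 = Sum.inl i ∧ v 1 = Sum.inr x ∧ (b, x) ∈ ψ.clauses.get i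

/-! ### The target normal form `∃Y ∀x̄(∃ȳ Y z̄ȳ ∧ C₁ ∧ ⋯ ∧ Cₘ)` -/

/-- A formula of the form `∃Y ∀x̄(∃ȳ Y z̄ȳ ∧ C₁ ∧ ⋯ ∧ Cₘ)`, where `Y` is a
single second-order variable of arity `a`, the variables `x̄` are those of
index `< nvars`, `z̄` is a tuple of `p` variables from `x̄`, `ȳ` consists of
the remaining `a - p` argument positions of `Y`, and each `Cᵢ` is a
disjunction of atomic or negated atomic formulas over `σ ∪ {Y}`. -/
structure SkolemForm (σ : Vocab) where
  nvars : ℕ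
  a : ℕ
  p : ℕ
  hp : p ≤ a
  zs : Fin p → ℕ
  hz : ∀ i, zs i < nvars
  clauses : List (List (ELit σ 1 (fun _ => a)))

def SkolemForm.Sat (F : SkolemForm σ) (A : Struct σ) (e : ℕ → A.Dom) : Prop :=
  ∃ Y : Set (Fin F.a → A.Dom),
    ∀ s : ℕ → A.Dom, (∀ j, F.nvars ≤ j → s j = e j) →
      (∃ w : Fin F.a → A.Dom,
          w ∈ Y ∧ ∀ (i : Fin F.a) (h : i.val < F.p), w i = s (F.zs ⟨i.val, h⟩)) ∧
      ∀ C ∈ F.clauses, ∃ l ∈ C, ELit.Sat A (fun _ => Y) s l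

end SOKrom

namespace SOKrom

/-- Compatibility of a valuation over a substructure and one over the full
structure: membership of tuples from the subset coincides. -/
def Compat {σ : Vocab} {m : ℕ} {ar : Fin m → ℕ} {A : Struct σ} {D : Set A.Dom}
    (V' : Val m ar D) (V : Val m ar A.Dom) : Prop :=
  ∀ (i : Fin m) (t : Fin (ar i) → D), t ∈ V' i ↔ (fun k => (t k : A.Dom)) ∈ V i

theorem elit_sub {σ : Vocab} {m : ℕ} {ar : Fin m → ℕ} {A : Struct σ}
    {D : Set A.Dom} {V' : Val m ar D} {V : Val m ar A.Dom}
    (hV : Compat V' V) (s' : ℕ → D) (l : ELit σ m ar)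
    (hl : l.Sat A V (fun n => (s' n : A.Dom))) :
    l.Sat (Substruct A D) V' s' := by
  cases l with
  | pos r args => exact hl
  | neg r args => exact hl
  | vpos i args => exact (hV i _).2 hl
  | vneg i args => exact fun hc => hl ((hV i _).1 hc)
  | eq a b => exact Subtype.ext hl
  | ne a b => exact fun hc => hl (congrArg Subtype.val hc)

theorem compat_update {σ : Vocab} {m : ℕ} {ar : Fin m → ℕ} {A : Struct σ}
    {D : Set A.Dom} {V' : Val m ar D} {V : Val m ar A.Dom}
    (hV : Compat V' V) (i : Fin m) (S' : Set (Fin (ar i) → D))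
    (S : Set (Fin (ar i) → A.Dom))
    (hS : ∀ t : Fin (ar i) → D, t ∈ S' ↔ (fun k => (t k : A.Dom)) ∈ S) :
    Compat (Function.update V' i S') (Function.update V i S) := by
  intro i' t
  rcases eq_or_ne i' i with rfl | hne
  · simpa using hS t
  · simp only [Function.update_of_ne hne]
    exact hV i' t

theorem hlit_sub {m : ℕ} {ar : Fin m → ℕ} {AD : Type} {D : Set AD}
    {V' : Val m ar D} {V : Val m ar AD}
    (hV : ∀ (i : Fin m) (t : Fin (ar i) → D),
      t ∈ V' i ↔ (fun k => (t k : AD)) ∈ V i)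
    (s' : ℕ → D) (H : HLit m ar)
    (hH : H.Sat V (fun k => (s' k : AD))) : H.Sat V' s' := by
  unfold HLit.Sat at hH ⊢
  by_cases hsign : H.sign
  · rw [if_pos hsign] at hH ⊢; exact (hV _ _).2 hH
  · rw [if_neg hsign] at hH ⊢; exact fun hc => hH ((hV _ _).1 hc)

theorem matrix_sub {σ : Vocab} (Φ : EKrom σ) (A : Struct σ) (D : Set A.Dom)
    (e : ℕ → D) {V : Val Φ.m Φ.ar A.Dom} {V' : Val Φ.m Φ.ar (↥D)}
    (hV : Compat V' V) (h : Φ.Matrix A V (fun k => (e k : A.Dom))) :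
    Φ.Matrix (Substruct A D) V' e := by
  intro s'' hs' C hC
  let s' : ℕ → ↥D := s''
  have hmat := h (fun k => (s' k : A.Dom))
    (fun k hk => congrArg Subtype.val (hs' k hk)) C hC
  rcases hmat with ⟨l, hl, hsat⟩ | hH | hH
  · exact Or.inl ⟨l, hl, elit_sub hV s' l hsat⟩
  · exact Or.inr (Or.inl (hlit_sub hV s' C.h1 hH))
  · exact Or.inr (Or.inr (hlit_sub hV s' C.h2 hH))

theorem ekrom_sub_aux (σ : Vocab) (Φ : EKrom σ) (A : Struct σ) (D : Set A.Dom)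
    (e : ℕ → D) :
    ∀ (n j : ℕ), Φ.m - j ≤ n →
      ∀ (V : Val Φ.m Φ.ar A.Dom) (V' : Val Φ.m Φ.ar (↥D)),
      Compat V' V →
      Φ.satAux A (fun k => (e k : A.Dom)) V j →
      Φ.satAux (Substruct A D) e V' j := by
  intro n
  induction n with
  | zero =>
      intro j hj V V' hV h
      have hj' : ¬ j < Φ.m := by omega
      erw [EKrom.satAux] at h ⊢
      rw [dif_neg hj'] at h ⊢
      exact matrix_sub Φ A D e hV h
  | succ n ih =>
      intro j hj V V' hV h
      erw [EKrom.satAux] at h ⊢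
      by_cases hlt : j < Φ.m
      · rw [dif_pos hlt] at h ⊢
        by_cases hq : Φ.qt ⟨j, hlt⟩
        · rw [if_pos hq] at h ⊢
          rcases h with ⟨S, hS⟩
          refine ⟨{t : Fin (Φ.ar ⟨j, hlt⟩) → ↥D | (fun k => (t k : A.Dom)) ∈ S}, ?_⟩
          exact ih (j + 1) (by omega) _ _
            (compat_update hV _ _ S (fun t => Iff.rfl)) hS
        · rw [if_neg hq] at h ⊢
          intro S'
          let S'' : Set (Fin (Φ.ar ⟨j, hlt⟩) → ↥D) := S'
          refine ih (j + 1) (by omega) _ _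
            (compat_update hV _ S''
              {w | ∃ t ∈ S'', ∀ k, w k = (t k : A.Dom)} ?_)
            (h _)
          intro t
          constructor
          · intro ht; exact ⟨t, ht, fun k => rfl⟩
          · rintro ⟨t', ht', heq⟩
            have : t = t' := funext fun k => Subtype.ext (heq k)
            exact this ▸ ht'
      · rw [dif_neg hlt] at h ⊢
        exact matrix_sub Φ A D e hV h

/-- SO-EKROM formulas are closed under substructures: if a finite structure
`A` satisfies an SO-EKROM formula (under an environment taking values in a
nonempty subset `D` of the domain), then the substructure induced by `D` also
satisfies it. -/
theorem ekrom_closed_under_substructures (σ : Vocab) (Φ : EKrom σ)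
    (A : Struct σ) [Fintype A.Dom] [Nonempty A.Dom] (D : Set A.Dom)
    (hD : D.Nonempty) (e : ℕ → D)
    (h : Φ.Sat A (fun n => (e n : A.Dom))) :
    Φ.Sat (Substruct A D) e := by
  exact ekrom_sub_aux σ Φ A D e Φ.m 0 (by omega) _ _
    (fun i t => by simp [Set.mem_empty_iff_false]; exact fun hc => hc) h

end SOKrom
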